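/- In the Teleported CHSH game, if the resources are classical shared randomness together with arbitrary Alice–Charlie and Bob–Charlie non-signaling resources in which Charlie receives no input (Charlie's marginal output distribution is fixed), then the maximum winning probability is 3/4. Formally: if Charlie's outputs (Z₁,Z₂) have a fixed distribution independent of everything else communicated to him, and Alice's output X is a (randomized) function of A and shared randomness, Bob's output Y of B and shared randomness, then Pr[X ⊕ Y ⊕ A·Z₁ ⊕ (1−A)·Z₂ = A·B] ≤ 3/4 for independent uniform bits A, B. -/
import Mathlib

lemma chsh_det_bound (x0 x1 y0 y1 z1 z2 : Bool) :
    ((if xor x1 (xor y1 z1) = true then 1 else 0) +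
     (if xor x1 (xor y0 z1) = false then 1 else 0) +
     ((if xor x0 (xor y1 z2) = false then 1 else 0) +
      (if xor x0 (xor y0 z2) = false then 1 else 0)) : ℝ) ≤ 3 := by
  rcases x0 <;> rcases x1 <;> rcases y0 <;> rcases y1 <;> rcases z1 <;> rcases z2 <;>
    norm_num

/-- In the Teleported CHSH game, if Charlie receives no input (so, WLOG after
simulating the one-input-party non-signaling resources by shared randomness,
the strategy is: shared seed `ω ~ p`, `X = f ω A`, `Y = g ω B`,
`(Z₁, Z₂) = h ω`), then the winning probability
`Pr[X ⊕ Y ⊕ A·Z₁ ⊕ (1−A)·Z₂ = A·B]` over independent uniform bits `A, B`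
is at most 3/4. -/
theorem teleported_chsh_nonsignaling_bound
    {Ω : Type*} [Fintype Ω] (p : Ω → ℝ)
    (hp : ∀ ω, 0 ≤ p ω) (hsum : ∑ ω, p ω = 1)
    (f g : Ω → Bool → Bool) (h : Ω → Bool × Bool) :
    ∑ ω, p ω * ((1 / 4 : ℝ) * ∑ a : Bool, ∑ b : Bool,
      (if xor (f ω a) (xor (g ω b)
          (xor (a && (h ω).1) (!a && (h ω).2))) = (a && b)
       then 1 else 0)) ≤ 3 / 4 := by
  calc ∑ ω, p ω * ((1 / 4 : ℝ) * ∑ a : Bool, ∑ b : Bool,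
      (if xor (f ω a) (xor (g ω b)
          (xor (a && (h ω).1) (!a && (h ω).2))) = (a && b)
       then 1 else 0)) ≤ ∑ ω, p ω * (3/4) := by
        apply Finset.sum_le_sum
        intro ω _
        apply mul_le_mul_of_nonneg_left _ (hp ω)
        have := chsh_det_bound (f ω false) (f ω true) (g ω false) (g ω true)
          (h ω).1 (h ω).2
        simp only [Fintype.sum_bool, Bool.true_and, Bool.false_and, Bool.not_true,
          Bool.not_false, Bool.xor_false, Bool.false_xor] at *
        linarith
    _ = 3/4 := by rw [← Finset.sum_mul, hsum, one_mul]
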